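/- Let X and Y be Banach spaces, F : X ⇒ Y a set-valued mapping whose graph is convex and locally closed (in the product topology) near (x̄,ȳ) ∈ gph F. Then sr[F](x̄,ȳ) = \overline{|∂F|}(x̄,ȳ), i.e. the metric subregularity modulus of F at (x̄,ȳ) equals the strict subdifferential slope of F at (x̄,ȳ). -/

import Mathlib

open Filter Metric Topology ENNReal

section Defs

variable {X Y : Type*} [NormedAddCommGroup X] [NormedSpace ℝ X]
  [NormedAddCommGroup Y] [NormedSpace ℝ Y]

/-- The Fréchet normal cone to `Ω` at `p`:
`N_Ω(p) := {p* : limsup_{q→p, q∈Ω∖{p}} ⟨p*, q−p⟩/‖q−p‖ ≤ 0}` (empty when `p ∉ Ω`);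
the defining limsup inequality is expressed in the equivalent ε-form. -/
def frNormalCone {E : Type*} [NormedAddCommGroup E] [NormedSpace ℝ E]
    (Ω : Set E) (p : E) : Set (E →L[ℝ] ℝ) :=
  {l | p ∈ Ω ∧ ∀ ε : ℝ, 0 < ε → ∀ᶠ q in 𝓝[Ω \ {p}] p, l (q - p) ≤ ε * ‖q - p‖}

/-- The Fréchet coderivative of `F` at `(x,y) ∈ gph F`:
`D*F(x,y)(y*) := {x* : (x*,−y*) ∈ N_{gph F}(x,y)}`. -/
def coderiv (F : X → Set Y) (x : X) (y : Y) (q : Y →L[ℝ] ℝ) : Set (X →L[ℝ] ℝ) :=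
  {l | l.coprod (-q) ∈ frNormalCone {p : X × Y | p.2 ∈ F p.1} (x, y)}

/-- The duality mapping `J(v) := {y* : ‖y*‖ = 1, ⟨y*,v⟩ = ‖v‖}`. -/
def dualityMap (v : Y) : Set (Y →L[ℝ] ℝ) := {q | ‖q‖ = 1 ∧ q v = ‖v‖}

/-- The subdifferential ρ-slope of `F` at `(x,y) ∈ gph F` (for `y ≠ ȳ`):
`|∂F|_ρ(x,y) := inf {‖x*‖ : x* ∈ D*F(x,y)(J(y−ȳ) + ρB*)}` (`inf ∅ = +∞`). -/
noncomputable def sdSlopeF (F : X → Set Y) (y₀ : Y) (ρ : ℝ) (x : X) (y : Y) : ℝ≥0∞ :=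
  ⨅ (l : X →L[ℝ] ℝ)
    (_ : ∃ q j : Y →L[ℝ] ℝ, j ∈ dualityMap (y - y₀) ∧ ‖q - j‖ ≤ ρ ∧ l ∈ coderiv F x y q),
      (‖l‖₊ : ℝ≥0∞)

/-- The strict subdifferential slope of `F` at `(x̄,ȳ)`:
`\overline{|∂F|}(x̄,ȳ) := lim_{ρ↓0} inf {|∂F|_ρ(x,y) : (x,y) ∈ gph F, x ∉ F⁻¹(ȳ),
‖x−x̄‖ < ρ, ‖y−ȳ‖ < ρ}` (the limit being a supremum by monotonicity; `inf ∅ = +∞`). -/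
noncomputable def strictSdSlopeF (F : X → Set Y) (x₀ : X) (y₀ : Y) : ℝ≥0∞ :=
  ⨆ (ρ : ℝ) (_ : 0 < ρ),
    ⨅ (p : X × Y)
      (_ : p.2 ∈ F p.1 ∧ y₀ ∉ F p.1 ∧ ‖p.1 - x₀‖ < ρ ∧ ‖p.2 - y₀‖ < ρ),
        sdSlopeF F y₀ ρ p.1 p.2

/-- The metric subregularity modulus
`sr[F](x̄,ȳ) := liminf_{x→x̄, x∉F⁻¹(ȳ)} d(ȳ,F(x)) / d(x,F⁻¹(ȳ))`. -/
noncomputable def srMod (F : X → Set Y) (x₀ : X) (y₀ : Y) : ℝ≥0∞ :=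
  ⨆ (δ : ℝ) (_ : 0 < δ),
    ⨅ (x : X) (_ : dist x x₀ < δ ∧ y₀ ∉ F x),
      EMetric.infEdist y₀ (F x) / EMetric.infEdist x {x' | y₀ ∈ F x'}

end Defs


section Aux

variable {E : Type*} [NormedAddCommGroup E] [NormedSpace ℝ E]

theorem mem_frNormalCone_of_forall {Ω : Set E} {p : E} {l : E →L[ℝ] ℝ}
    (hp : p ∈ Ω) (h : ∀ z ∈ Ω, l (z - p) ≤ 0) : l ∈ frNormalCone Ω p := by
  refine ⟨hp, fun ε hε => ?_⟩
  filter_upwards [eventually_mem_nhdsWithin] with q hq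
  exact (h q hq.1).trans (by positivity)

theorem frNormalCone_le_of_convex {Ω : Set E} (hΩ : Convex ℝ Ω) {p : E} {l : E →L[ℝ] ℝ}
    (hl : l ∈ frNormalCone Ω p) {z : E} (hz : z ∈ Ω) : l (z - p) ≤ 0 := by
  rcases eq_or_ne z p with rfl | hne
  · simp
  have key : ∀ ε : ℝ, 0 < ε → l (z - p) ≤ ε * ‖z - p‖ := by
    intro ε hε
    have hev := hl.2 ε hε
    -- the path t ↦ p + t • (z - p), t → 0+, stays in Ω \ {p} and tends to p
    have htend : Tendsto (fun t : ℝ => p + t • (z - p)) (𝓝[>] (0:ℝ)) (𝓝[Ω \ {p}] p) := by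
      apply tendsto_nhdsWithin_of_tendsto_nhds_of_eventually_within
      · have h1 : Tendsto (fun t : ℝ => p + t • (z - p)) (𝓝 (0:ℝ)) (𝓝 (p + (0:ℝ) • (z - p))) :=
          ((tendsto_id.smul_const _).const_add _)
        simpa using h1.mono_left nhdsWithin_le_nhds
      · filter_upwards [Ioo_mem_nhdsGT_of_mem (by norm_num : (0:ℝ) ∈ Set.Ico (0:ℝ) 1)] with t ht
        refine ⟨?_, ?_⟩
        · have := hΩ hl.1 hz (by linarith [ht.1, ht.2] : (0:ℝ) ≤ 1 - t) ht.1.le (by ring)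
          convert this using 1
          module
        · simp only [Set.mem_singleton_iff]
          intro hcontra
          have : t • (z - p) = 0 := by
            have := congrArg (fun w => w - p) hcontra; simpa using this
          rcases smul_eq_zero.1 this with h | h
          · exact absurd h (ne_of_gt ht.1)
          · exact hne (by rwa [sub_eq_zero] at h)
    have := (htend.eventually hev).and (eventually_mem_nhdsWithin (s := Set.Ioi (0:ℝ)))
    rcases this.exists with ⟨t, h1, (h2 : 0 < t)⟩
    have heq : p + t • (z - p) - p = t • (z - p) := by abel
    rw [heq] at h1
    rw [map_smul, norm_smul, Real.norm_eq_abs, abs_of_pos h2] at h1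
    simp only [smul_eq_mul] at h1
    calc l (z - p) ≤ ε * ‖z - p‖ := by nlinarith
    _ = ε * ‖z-p‖ := rfl
  by_contra hcon
  push_neg at hcon
  rcases eq_or_ne (‖z - p‖) 0 with h0 | h0
  · have := key 1 one_pos; rw [h0] at this; linarith
  · set ε := l (z - p) / (2 * ‖z - p‖) with hεdef
    have hnorm : 0 < ‖z - p‖ := lt_of_le_of_ne (norm_nonneg _) (Ne.symm h0)
    have hεpos : 0 < ε := div_pos hcon (by linarith)
    have := key ε hεpos
    rw [hεdef, div_mul_eq_mul_div, mul_comm] at this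
    have : l (z - p) ≤ l (z-p) / 2 := by
      calc l (z-p) ≤ ‖z-p‖ * l (z-p) / (2 * ‖z-p‖) := this
      _ = l (z-p) / 2 := by field_simp
    linarith


/-- Master separation lemma: an affine function sandwiched between a convex set lying
below `g` and the continuous convex function `g`. -/
theorem affine_separation {g : E → ℝ} (hg : ConvexOn ℝ Set.univ g) (hgc : Continuous g)
    {D : Set (E × ℝ)} (hD : Convex ℝ D) (hDne : D.Nonempty)
    (hbelow : ∀ d ∈ D, d.2 ≤ g d.1) :
    ∃ (h : E →L[ℝ] ℝ) (r : ℝ), (∀ z, h z + r ≤ g z) ∧ (∀ d ∈ D, d.2 ≤ h d.1 + r) := by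
  set A : Set (E × ℝ) := {p | g p.1 < p.2} with hA
  have hAopen : IsOpen A := isOpen_lt (hgc.comp continuous_fst) continuous_snd
  have hAconv : Convex ℝ A := by
    intro p hp q hq s t hs ht hst
    simp only [hA, Set.mem_setOf_eq] at *
    calc g (s • p.1 + t • q.1) ≤ s * g p.1 + t * g q.1 :=
          hg.2 (Set.mem_univ _) (Set.mem_univ _) hs ht hst
    _ < s * p.2 + t * q.2 := by
        rcases hs.lt_or_eq with hs' | hs'
        · rcases ht.lt_or_eq with ht' | ht'
          · exact add_lt_add (by nlinarith) (by nlinarith)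
          · have : s = 1 := by rw [← ht'] at hst; linarith
            rw [← ht']; simp only [zero_mul, add_zero]; nlinarith
        · have : t = 1 := by rw [← hs'] at hst; linarith
          rw [← hs']; simp only [zero_mul, zero_add]; nlinarith
    _ = (s • p + t • q).2 := rfl
  have hdisj : Disjoint A D := by
    rw [Set.disjoint_left]
    intro p hpA hpD
    exact absurd (hbelow p hpD) (not_le.2 hpA)
  obtain ⟨f, u, hfA, hfD⟩ := geometric_hahn_banach_open hAconv hAopen hD hdisj
  obtain ⟨d₀, hd₀⟩ := hDne
  -- γ := f (0, 1) is negative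
  set γ : ℝ := f (0, 1) with hγ
  have hsplit : ∀ (z : E) (t : ℝ), f (z, t) = f (z, 0) + t * γ := by
    intro z t
    have : (z, t) = (z, (0:ℝ)) + t • ((0:E), (1:ℝ)) := by
      simp [Prod.ext_iff]
    rw [this, map_add, map_smul]; simp [hγ]
  have hγneg : γ < 0 := by
    have h1 : f (d₀.1, g d₀.1 + 1) < u := hfA _ (by simp [hA])
    have h2 : u ≤ f d₀ := hfD d₀ hd₀
    have h2' : u ≤ f (d₀.1, d₀.2) := by rwa [← Prod.mk.eta (p := d₀)] at h2
    rw [hsplit] at h1 h2'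
    have hd2 : d₀.2 ≤ g d₀.1 := hbelow d₀ hd₀
    nlinarith
  -- ∀ z, f (z, 0) + g z * γ ≤ u
  have hkey : ∀ z : E, f (z, 0) + g z * γ ≤ u := by
    intro z
    by_contra hc
    push_neg at hc
    set s : ℝ := (f (z, 0) + g z * γ - u) / (-γ) with hs
    have hspos : 0 < s := div_pos (by linarith) (by linarith)
    have hmem : (z, g z + s) ∈ A := by simp only [hA, Set.mem_setOf_eq]; exact lt_add_of_pos_right _ hspos
    have h3 := hfA _ hmem
    rw [hsplit] at h3
    have hsγ : s * γ = -(f (z, 0) + g z * γ - u) := by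
      rw [hs, div_mul_eq_mul_div, div_neg, mul_div_assoc, div_self (ne_of_lt hγneg), mul_one]
    nlinarith
  set β : ℝ := -γ with hβ
  have hβpos : 0 < β := by simp [hβ]; linarith
  refine ⟨(β⁻¹) • (f.comp (ContinuousLinearMap.inl ℝ E ℝ)), -u / β, ?_, ?_⟩
  · intro z
    have := hkey z
    simp only [ContinuousLinearMap.smul_apply, ContinuousLinearMap.comp_apply,
      ContinuousLinearMap.inl_apply, smul_eq_mul]
    have hβγ : γ = -β := by rw [hβ]; ring
    rw [hβγ] at this
    have h4 : f (z, 0) ≤ u + g z * β := by nlinarith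
    have : β⁻¹ * f (z, 0) + -u / β ≤ β⁻¹ * (u + g z * β) + -u / β := by
      have := (mul_le_mul_iff_right₀ (inv_pos.2 hβpos)).2 h4
      linarith
    calc β⁻¹ * f (z, 0) + -u / β ≤ β⁻¹ * (u + g z * β) + -u / β := this
    _ = g z := by field_simp; ring
  · intro d hd
    have h2 : u ≤ f (d.1, d.2) := by rw [Prod.mk.eta]; exact hfD d hd
    rw [hsplit] at h2
    simp only [ContinuousLinearMap.smul_apply, ContinuousLinearMap.comp_apply,
      ContinuousLinearMap.inl_apply, smul_eq_mul]
    have hβγ : γ = -β := by rw [hβ]; ring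
    rw [hβγ] at h2
    have h5 : d.2 * β ≤ f (d.1, 0) - u := by nlinarith
    have h6 : d.2 ≤ (f (d.1, 0) - u) / β := (le_div_iff₀ hβpos).2 h5
    calc d.2 ≤ (f (d.1, 0) - u) / β := h6
    _ = β⁻¹ * f (d.1, 0) + -u / β := by field_simp; ring


end Aux

/-- Subgradient at a constrained minimum of a continuous convex function. -/
theorem subgradient_of_isMinOn {E : Type*} [NormedAddCommGroup E] [NormedSpace ℝ E] {g : E → ℝ} (hg : ConvexOn ℝ Set.univ g) (hgc : Continuous g)
    {C : Set E} (hC : Convex ℝ C) {p : E} (hp : p ∈ C) (hmin : ∀ z ∈ C, g p ≤ g z) :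
    ∃ h : E →L[ℝ] ℝ, (∀ z, h (z - p) ≤ g z - g p) ∧ (∀ z ∈ C, 0 ≤ h (z - p)) := by
  obtain ⟨h, r, h1, h2⟩ := affine_separation hg hgc (hC.prod (convex_singleton (g p)))
    ⟨(p, g p), by simp [hp]⟩ (fun d hd => by
      rcases hd with ⟨hd1, hd2⟩
      simp only [Set.mem_singleton_iff] at hd2
      rw [hd2]; exact hmin _ hd1)
  have heq : h p + r = g p :=
    le_antisymm (h1 p) (h2 (p, g p) (by simp [hp]))
  refine ⟨h, fun z => ?_, fun z hz => ?_⟩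
  · have := h1 z
    rw [map_sub]; linarith
  · have := h2 (z, g p) (by simp [hz])
    rw [map_sub]; linarith

/-- Splitting off a norm subgradient: if `η (v - y') ≤ ‖v - y₀‖ - ‖y' - y₀‖ + b * ‖v - y'‖`
for all `v`, then `η = j + λ` with `j` a subgradient of the norm at `y' - y₀` and `‖λ‖ ≤ b`. -/
theorem norm_subgradient_split {Y : Type*} [NormedAddCommGroup Y] [NormedSpace ℝ Y]
    {η : Y →L[ℝ] ℝ} {y' y₀ : Y} {b : ℝ} (hb : 0 ≤ b)
    (hstar : ∀ v : Y, η (v - y') ≤ ‖v - y₀‖ - ‖y' - y₀‖ + b * ‖v - y'‖) :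
    ∃ j : Y →L[ℝ] ℝ, (∀ w, j w ≤ ‖y' - y₀ + w‖ - ‖y' - y₀‖) ∧ ‖η - j‖ ≤ b := by
  set v₀ : Y := y' - y₀ with hv₀
  set c : Y → ℝ := fun w => η w - ‖v₀ + w‖ + ‖v₀‖ with hc
  have hcle : ∀ w, c w ≤ b * ‖w‖ := by
    intro w
    have := hstar (y' + w)
    simp only [add_sub_cancel_left] at this
    have he : y' + w - y₀ = v₀ + w := by rw [hv₀]; abel
    rw [he] at this
    simp only [hc]; linarith
  have hgconv : ConvexOn ℝ Set.univ (fun w : Y => b * ‖w‖) :=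
    (convexOn_norm convex_univ).smul hb
  have hgc : Continuous (fun w : Y => b * ‖w‖) := continuous_const.mul continuous_norm
  set D : Set (Y × ℝ) := {p | p.2 ≤ c p.1} with hD
  have hDconv : Convex ℝ D := by
    intro q1 hq1 q2 hq2 s t hs ht hst
    simp only [hD, Set.mem_setOf_eq, hc] at *
    have hnorm : ‖v₀ + (s • q1.1 + t • q2.1)‖ ≤ s * ‖v₀ + q1.1‖ + t * ‖v₀ + q2.1‖ := by
      have hvv : s • v₀ + t • v₀ = v₀ := by rw [← add_smul, hst, one_smul]
      have : v₀ + (s • q1.1 + t • q2.1) = s • (v₀ + q1.1) + t • (v₀ + q2.1) := by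
        rw [smul_add, smul_add]
        rw [show s • v₀ + s • q1.1 + (t • v₀ + t • q2.1) = (s • v₀ + t • v₀) + (s • q1.1 + t • q2.1) by abel, hvv]
      rw [this]
      calc ‖s • (v₀ + q1.1) + t • (v₀ + q2.1)‖ ≤ ‖s • (v₀ + q1.1)‖ + ‖t • (v₀ + q2.1)‖ :=
            norm_add_le _ _
      _ = s * ‖v₀ + q1.1‖ + t * ‖v₀ + q2.1‖ := by
          rw [norm_smul, norm_smul, Real.norm_eq_abs, Real.norm_eq_abs,
            abs_of_nonneg hs, abs_of_nonneg ht]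
    have hη : η (s • q1.1 + t • q2.1) = s * η q1.1 + t * η q2.1 := by
      rw [map_add, map_smul, map_smul]; simp
    simp only [Prod.snd_add, Prod.smul_snd, Prod.fst_add, Prod.smul_fst, smul_eq_mul]
    rw [hη]
    nlinarith [mul_le_mul_of_nonneg_left hq1 hs, mul_le_mul_of_nonneg_left hq2 ht, hst, norm_nonneg v₀]
  obtain ⟨h, r, h1, h2⟩ := affine_separation hgconv hgc hDconv ⟨(0, c 0), by simp [hD]⟩
    (fun d hd => le_trans hd (hcle d.1))
  have hr0 : r = 0 := by
    have ha := h1 0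
    have hb' := h2 (0, c 0) (by simp [hD])
    simp only [map_zero, norm_zero, mul_zero, zero_add] at ha
    simp only [hc, map_zero, add_zero, sub_add_cancel] at hb'
    simp only [map_zero, zero_add] at hb'
    linarith
  subst hr0
  refine ⟨η - h, fun w => ?_, ?_⟩
  · have := h2 (w, c w) (by simp [hD])
    simp only [add_zero] at this
    simp only [hc] at this
    simp only [ContinuousLinearMap.sub_apply]
    linarith
  · have hnorm : ∀ w, |h w| ≤ b * ‖w‖ := by
      intro w
      have hp := h1 w
      have hm := h1 (-w)
      simp only [add_zero, map_neg, norm_neg] at hp hm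
      rw [abs_le]; constructor <;> linarith
    have : ‖h‖ ≤ b := by
      apply ContinuousLinearMap.opNorm_le_bound _ hb
      intro w
      rw [Real.norm_eq_abs]; exact hnorm w
    simpa using this

/-- A subgradient of the norm at a nonzero point is a duality-map element. -/
theorem dualityMap_of_norm_subgradient {Y : Type*} [NormedAddCommGroup Y] [NormedSpace ℝ Y]
    {j : Y →L[ℝ] ℝ} {v : Y} (hv : v ≠ 0) (hj : ∀ w, j w ≤ ‖v + w‖ - ‖v‖) :
    ‖j‖ = 1 ∧ j v = ‖v‖ := by
  have hle : ∀ w, j w ≤ ‖w‖ := fun w =>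
    (hj w).trans (by linarith [norm_add_le v w, norm_sub_norm_le (v + w) v])
  have hjv : j v = ‖v‖ := by
    have h1 : j v ≤ ‖v‖ := by
      have := hj v
      calc j v ≤ ‖v + v‖ - ‖v‖ := this
      _ ≤ ‖v‖ := by
          have : ‖v + v‖ ≤ ‖v‖ + ‖v‖ := norm_add_le _ _
          linarith
    have h2 : ‖v‖ ≤ j v := by
      have := hj (-v)
      simp only [add_neg_cancel, norm_zero, map_neg] at this
      linarith
    linarith
  have hnorm1 : ‖j‖ = 1 := by
    apply le_antisymm
    · apply ContinuousLinearMap.opNorm_le_bound _ zero_le_one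
      intro w
      rw [Real.norm_eq_abs, one_mul, abs_le]
      refine ⟨?_, hle w⟩
      have := hle (-w); simp at this; linarith
    · have h3 : ‖v‖ ≤ ‖j‖ * ‖v‖ := by
        have hop := j.le_opNorm v
        rw [Real.norm_eq_abs] at hop
        calc ‖v‖ = j v := hjv.symm
        _ ≤ |j v| := le_abs_self _
        _ ≤ ‖j‖ * ‖v‖ := hop
      have hvpos : 0 < ‖v‖ := norm_pos_iff.2 hv
      exact le_of_mul_le_mul_right (by linarith) hvpos
  exact ⟨hnorm1, hjv⟩


/-- Tailored Ekeland variational principle with a norm-like penalty `Φ`. -/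
theorem ekeland_aux {E : Type*} [NormedAddCommGroup E] [CompleteSpace E]
    {C : Set E} (hC : IsClosed C) {f : E → ℝ} (hf : Continuous f)
    (hf0 : ∀ z ∈ C, 0 ≤ f z)
    {Φ : E → ℝ} (hΦc : Continuous Φ) (hΦ0 : Φ 0 = 0)
    (hΦsub : ∀ z w, Φ (z + w) ≤ Φ z + Φ w)
    {m : ℝ} (hm : 0 < m) (hΦlow : ∀ z, m * ‖z‖ ≤ Φ z)
    {p₀ : E} (hp₀ : p₀ ∈ C) :
    ∃ p' ∈ C, (f p' + Φ (p' - p₀) ≤ f p₀) ∧ ∀ q ∈ C, f p' ≤ f q + Φ (q - p') := by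
  have hΦnn : ∀ z, 0 ≤ Φ z := fun z => le_trans (by positivity) (hΦlow z)
  set S : E → Set E := fun p => {q ∈ C | f q + Φ (q - p) ≤ f p} with hS
  have hself : ∀ p ∈ C, p ∈ S p := fun p hp => ⟨hp, by simp [hΦ0]⟩
  have htrans : ∀ p q w : E, q ∈ S p → w ∈ S q → w ∈ S p := by
    intro p q w hq hw
    refine ⟨hw.1, ?_⟩
    have h1 : Φ (w - p) ≤ Φ (w - q) + Φ (q - p) := by
      have := hΦsub (w - q) (q - p); rwa [sub_add_sub_cancel] at this
    have := hw.2; have := hq.2; linarith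
  have hSsub : ∀ p, S p ⊆ C := fun p q hq => hq.1
  -- infimum over S p
  set I : E → ℝ := fun p => sInf (f '' S p) with hI
  have hIle : ∀ p, ∀ q ∈ S p, I p ≤ f q := by
    intro p q hq
    apply csInf_le ⟨0, fun r hr => ?_⟩ (Set.mem_image_of_mem f hq)
    obtain ⟨w, hw, rfl⟩ := hr
    exact hf0 w (hSsub p hw)
  have hnext : ∀ p ∈ C, ∀ n : ℕ, ∃ q ∈ S p, f q ≤ I p + (1/2)^n := by
    intro p hp n
    obtain ⟨a, ⟨w, hw, rfl⟩, ha⟩ := Real.lt_sInf_add_pos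
      (Set.Nonempty.image f ⟨p, hself p hp⟩) (show (0:ℝ) < (1/2)^n by positivity)
    exact ⟨w, hw, ha.le⟩
  -- the sequence
  choose! nextp hnext1 hnext2 using hnext
  set u : ℕ → E := fun n => Nat.rec p₀ (fun n p => nextp p n) n with hu
  have hu0 : u 0 = p₀ := rfl
  have husucc : ∀ n, u (n+1) = nextp (u n) n := fun n => rfl
  have huC : ∀ n, u n ∈ C := by
    intro n; induction n with
    | zero => exact hp₀
    | succ n ih => rw [husucc]; exact hSsub _ (hnext1 (u n) ih n)
  have hustep : ∀ n, u (n+1) ∈ S (u n) := fun n => by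
    rw [husucc]; exact hnext1 (u n) (huC n) n
  have huf : ∀ n, f (u (n+1)) ≤ I (u n) + (1/2)^n := fun n => by
    rw [husucc]; exact hnext2 (u n) (huC n) n
  have hchain : ∀ n k, n ≤ k → u k ∈ S (u n) := by
    intro n k hnk
    induction k with
    | zero => have : n = 0 := Nat.le_zero.mp hnk; subst this; exact hself _ hp₀
    | succ k ih =>
      rcases Nat.lt_or_ge n (k+1) with h | h
      · exact htrans _ _ _ (ih (Nat.lt_succ_iff.mp h)) (hustep k)
      · have : n = k + 1 := le_antisymm hnk h
        subst this; exact hself _ (huC (k+1))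
  -- key: anything in S (u (n+1)) has Φ-distance ≤ (1/2)^n from u (n+1)
  have hkey : ∀ n, ∀ q ∈ S (u (n+1)), Φ (q - u (n+1)) ≤ (1/2)^n := by
    intro n q hq
    have h1 : q ∈ S (u n) := htrans _ _ _ (hustep n) hq
    have h2 : I (u n) ≤ f q := hIle _ _ h1
    have h3 := huf n
    have := hq.2
    linarith
  -- Cauchy
  have hcauchy : CauchySeq u := by
    rw [Metric.cauchySeq_iff']
    intro ε hε
    obtain ⟨n, hn⟩ := exists_pow_lt_of_lt_one (show (0:ℝ) < m * ε by positivity)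
      (show (1:ℝ)/2 < 1 by norm_num)
    refine ⟨n + 1, fun k hk => ?_⟩
    have hmem : u k ∈ S (u (n+1)) := hchain _ _ hk
    have := hkey n _ hmem
    have hlow := hΦlow (u k - u (n+1))
    rw [dist_eq_norm]
    have : m * ‖u k - u (n+1)‖ ≤ (1/2)^n := le_trans hlow this
    calc ‖u k - u (n+1)‖ ≤ (1/2)^n / m := by rw [le_div_iff₀ hm]; linarith
    _ < ε := by rw [div_lt_iff₀ hm]; linarith
  obtain ⟨p', hp'⟩ := cauchySeq_tendsto_of_complete hcauchy
  have hp'C : p' ∈ C := hC.mem_of_tendsto hp' (Eventually.of_forall huC)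
  have hSclosed : ∀ p, IsClosed (S p) := by
    intro p
    have : IsClosed {q : E | f q + Φ (q - p) ≤ f p} :=
      isClosed_le (hf.add (hΦc.comp (continuous_id.sub continuous_const))) continuous_const
    exact hC.inter this
  have hp'S : ∀ n, p' ∈ S (u n) := by
    intro n
    apply (hSclosed (u n)).mem_of_tendsto hp'
    filter_upwards [eventually_ge_atTop n] with k hk
    exact hchain n k hk
  refine ⟨p', hp'C, ?_, ?_⟩
  · have := (hp'S 0).2; rwa [hu0] at this
  · intro q hq
    by_cases hqS : q ∈ S p'
    · -- then f p' ≤ f q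
      have hqall : ∀ n, q ∈ S (u n) := fun n => htrans _ _ _ (hp'S n) hqS
      have hfq : ∀ n : ℕ, f p' ≤ f q + (1/2)^n := by
        intro n
        have h1 : I (u n) ≤ f q := hIle _ _ (hqall n)
        have h2 := huf n
        have h3 : f p' ≤ f (u (n+1)) := by
          have := (hp'S (n+1)).2
          have := hΦnn (p' - u (n+1))
          linarith
        linarith
      have : f p' ≤ f q := by
        have htend : Tendsto (fun n : ℕ => f q + (1/2)^n) atTop (𝓝 (f q + 0)) :=
          tendsto_const_nhds.add (tendsto_pow_atTop_nhds_zero_of_lt_one (by norm_num) (by norm_num))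
        rw [add_zero] at htend
        exact ge_of_tendsto htend (Eventually.of_forall hfq)
      exact le_trans this (by linarith [hΦnn (q - p')])
    · have : ¬ (f q + Φ (q - p') ≤ f p') := fun h => hqS ⟨hq, h⟩
      linarith [not_le.mp this]


theorem convexOn_norm_comp_clm_sub {E F : Type*} [NormedAddCommGroup E] [NormedSpace ℝ E]
    [NormedAddCommGroup F] [NormedSpace ℝ F] (T : E →L[ℝ] F) (w : F) {k : ℝ} (hk : 0 ≤ k) :
    ConvexOn ℝ Set.univ (fun z => k * ‖T z - w‖) := by
  refine ⟨convex_univ, fun p _ q _ s t hs ht hst => ?_⟩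
  have hw : s • w + t • w = w := by rw [← add_smul, hst, one_smul]
  have hlin : T (s • p + t • q) - w = s • (T p - w) + t • (T q - w) := by
    rw [map_add, map_smul, map_smul, smul_sub, smul_sub,
      show s • T p - s • w + (t • T q - t • w) = s • T p + t • T q - (s • w + t • w) by abel, hw]
  have : ‖T (s • p + t • q) - w‖ ≤ s * ‖T p - w‖ + t * ‖T q - w‖ := by
    rw [hlin]
    calc ‖s • (T p - w) + t • (T q - w)‖ ≤ ‖s • (T p - w)‖ + ‖t • (T q - w)‖ := norm_add_le _ _
    _ = s * ‖T p - w‖ + t * ‖T q - w‖ := by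
        rw [norm_smul, norm_smul, Real.norm_eq_abs, Real.norm_eq_abs,
          abs_of_nonneg hs, abs_of_nonneg ht]
  simp only [smul_eq_mul]
  nlinarith [this, norm_nonneg (T p - w), norm_nonneg (T q - w)]



set_option maxHeartbeats 2000000 in
theorem hard_direction {X Y : Type*}
    [NormedAddCommGroup X] [NormedSpace ℝ X] [CompleteSpace X]
    [NormedAddCommGroup Y] [NormedSpace ℝ Y] [CompleteSpace Y]
    (F : X → Set Y) (x₀ : X) (y₀ : Y) (hgph : y₀ ∈ F x₀)
    (hconv : Convex ℝ {p : X × Y | p.2 ∈ F p.1})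
    (hclosed : ∃ U ∈ 𝓝 (x₀, y₀), IsClosed U ∧ IsClosed ({p : X × Y | p.2 ∈ F p.1} ∩ U)) :
    strictSdSlopeF F x₀ y₀ ≤ srMod F x₀ y₀ := by
  classical
  set gph : Set (X × Y) := {p : X × Y | p.2 ∈ F p.1} with hgphdef
  set M := srMod F x₀ y₀ with hM
  rw [strictSdSlopeF]
  apply iSup₂_le
  intro ρ hρ
  apply le_of_forall_gt_imp_ge_of_dense
  intro c hc
  -- pick intermediate real levels M < c₂ < c₁ < c
  obtain ⟨c₁, hMc₁, hc₁c⟩ := exists_between hc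
  obtain ⟨c₂, hMc₂, hc₂c₁⟩ := exists_between hMc₁
  have hc₁top : c₁ ≠ ⊤ := ne_top_of_lt hc₁c
  have hc₂top : c₂ ≠ ⊤ := ne_top_of_lt hc₂c₁
  set c1r := c₁.toReal with hc1r
  set c2r := c₂.toReal with hc2r
  have hc2rnn : 0 ≤ c2r := ENNReal.toReal_nonneg
  have hc12 : c2r < c1r := ENNReal.toReal_strict_mono hc₁top hc₂c₁
  have hc1rpos : 0 < c1r := lt_of_le_of_lt hc2rnn hc12
  -- the closed convex complete set C
  obtain ⟨U, hU, hUclosed, hgphU⟩ := hclosed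
  obtain ⟨r, hrpos, hrU⟩ := Metric.nhds_basis_closedBall.mem_iff.mp hU
  set B : Set (X × Y) := Metric.closedBall x₀ r ×ˢ Metric.closedBall y₀ r with hB
  have hBU : B ⊆ U := by
    refine subset_trans ?_ hrU
    intro z hz
    rw [Metric.mem_closedBall]
    rcases hz with ⟨h1, h2⟩
    rw [Prod.dist_eq]
    exact max_le (Metric.mem_closedBall.mp h1) (Metric.mem_closedBall.mp h2)
  set C : Set (X × Y) := gph ∩ B with hC
  have hCclosed : IsClosed C := by
    have : C = (gph ∩ U) ∩ B := by
      rw [hC, Set.inter_assoc, Set.inter_eq_right.mpr hBU]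
    rw [this]
    exact hgphU.inter ((Metric.isClosed_closedBall).prod (Metric.isClosed_closedBall))
  have hCconv : Convex ℝ C := hconv.inter ((convex_closedBall _ _).prod (convex_closedBall _ _))
  -- choose δ
  set δ : ℝ := min (ρ/2) (min (r/2) (min ρ r / (2 * (c2r + 1)))) with hδdef
  have hδpos : 0 < δ := by
    apply lt_min (by linarith)
    apply lt_min (by linarith)
    apply div_pos (lt_min hρ hrpos) (by linarith)
  have hδρ : 2 * δ ≤ ρ := by
    have := min_le_left (ρ/2) (min (r/2) (min ρ r / (2 * (c2r + 1)))); rw [← hδdef] at this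
    linarith
  have hδr : 2 * δ ≤ r := by
    have h1 := (min_le_right (ρ/2) _).trans (min_le_left (r/2) (min ρ r / (2 * (c2r + 1))))
    rw [← hδdef] at h1; linarith
  have hδc2ρ : c2r * δ < ρ := by
    have h1 := (min_le_right (ρ/2) _).trans (min_le_right (r/2) (min ρ r / (2 * (c2r + 1))))
    rw [← hδdef] at h1
    have h2 : min ρ r ≤ ρ := min_le_left _ _
    have h3 : c2r * δ ≤ c2r * (min ρ r / (2 * (c2r + 1))) :=
      mul_le_mul_of_nonneg_left h1 hc2rnn
    have h4 : c2r * (min ρ r / (2 * (c2r + 1))) < ρ := by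
      rw [mul_div_assoc']
      rw [div_lt_iff₀ (by linarith)]
      nlinarith [lt_min hρ hrpos, min_le_left ρ r]
    linarith
  have hδc2r : c2r * δ < r := by
    have h1 := (min_le_right (ρ/2) _).trans (min_le_right (r/2) (min ρ r / (2 * (c2r + 1))))
    rw [← hδdef] at h1
    have h3 : c2r * δ ≤ c2r * (min ρ r / (2 * (c2r + 1))) :=
      mul_le_mul_of_nonneg_left h1 hc2rnn
    have h4 : c2r * (min ρ r / (2 * (c2r + 1))) < r := by
      rw [mul_div_assoc']
      rw [div_lt_iff₀ (by linarith)]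
      nlinarith [lt_min hρ hrpos, min_le_right ρ r]
    linarith
  -- get the point x with small ratio
  have hinfle : (⨅ (x : X) (_ : dist x x₀ < δ ∧ y₀ ∉ F x),
      EMetric.infEdist y₀ (F x) / EMetric.infEdist x {x' | y₀ ∈ F x'}) ≤ M := by
    rw [hM, srMod]
    exact le_iSup₂ (f := fun δ (_ : 0 < δ) => ⨅ (x : X) (_ : dist x x₀ < δ ∧ y₀ ∉ F x),
      EMetric.infEdist y₀ (F x) / EMetric.infEdist x {x' | y₀ ∈ F x'}) δ hδpos
  have hinflt : (⨅ (x : X) (_ : dist x x₀ < δ ∧ y₀ ∉ F x),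
      EMetric.infEdist y₀ (F x) / EMetric.infEdist x {x' | y₀ ∈ F x'}) < c₂ :=
    lt_of_le_of_lt hinfle hMc₂
  rw [iInf_lt_iff] at hinflt
  obtain ⟨x, hx⟩ := hinflt
  rw [iInf_lt_iff] at hx
  obtain ⟨⟨hxδ, hxS⟩, hxratio⟩ := hx
  set S : Set X := {x' | y₀ ∈ F x'} with hS
  set s := EMetric.infEdist x S with hs
  set A := EMetric.infEdist y₀ (F x) with hA
  have hsfin : s ≠ ⊤ := by
    apply ne_top_of_le_ne_top (b := edist x x₀)
    · rw [edist_dist]; exact ENNReal.ofReal_ne_top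
    · exact EMetric.infEdist_le_edist_of_mem hgph
  -- A ≠ 0 via local closedness
  have hAne : A ≠ 0 := by
    intro hA0
    apply hxS
    have hclos : y₀ ∈ closure (F x) := by
      exact Metric.mem_closure_iff_infEDist_zero.2 hA0
    -- show (x, y₀) ∈ C, hence y₀ ∈ F x
    have hxy₀ : ((x, y₀) : X × Y) ∈ closure C := by
      rw [mem_closure_iff_nhds]
      intro W hW
      rw [nhds_prod_eq, Filter.mem_prod_iff] at hW
      obtain ⟨Wx, hWx, Wy, hWy, hWsub⟩ := hW
      obtain ⟨ε, hεpos, hεsub⟩ := Metric.mem_nhds_iff.mp hWy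
      rw [EMetric.mem_closure_iff] at hclos
      obtain ⟨v, hvF, hvd⟩ := hclos (ENNReal.ofReal (min ε r)) (by
        apply ENNReal.ofReal_pos.mpr; exact lt_min hεpos hrpos)
      have hvdist : dist y₀ v < min ε r := by
        rw [edist_dist] at hvd
        exact (ENNReal.ofReal_lt_ofReal_iff_of_nonneg dist_nonneg).mp hvd
      refine ⟨(x, v), ?_, ?_, ?_⟩
      · apply hWsub
        refine ⟨mem_of_mem_nhds hWx, hεsub ?_⟩
        rw [Metric.mem_ball, dist_comm]
        exact lt_of_lt_of_le hvdist (min_le_left _ _)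
      · exact hvF
      · refine ⟨?_, ?_⟩
        · rw [Metric.mem_closedBall]
          show dist x x₀ ≤ r
          linarith [hxδ]
        · rw [Metric.mem_closedBall, dist_comm]
          exact le_of_lt (lt_of_lt_of_le hvdist (min_le_right _ _))
    rw [hCclosed.closure_eq] at hxy₀
    exact hxy₀.1
  have hsne : s ≠ 0 := by
    intro hs0
    rw [hs0, ENNReal.div_zero hAne] at hxratio
    exact not_top_lt hxratio
  have hAlt : A < c₂ * s := by
    rwa [ENNReal.div_lt_iff (Or.inl hsne) (Or.inl hsfin)] at hxratio
  set sr := s.toReal with hsr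
  have hsrpos : 0 < sr := ENNReal.toReal_pos hsne hsfin
  have hsrδ : sr < δ := by
    have h1 : s ≤ ENNReal.ofReal (dist x x₀) := by
      rw [← edist_dist]; exact EMetric.infEdist_le_edist_of_mem hgph
    have h2 : sr ≤ dist x x₀ := ENNReal.toReal_le_of_le_ofReal dist_nonneg h1
    linarith
  -- pick y ∈ F x with ‖y - y₀‖ < c2r * sr
  have hc₂s : c₂ * s = ENNReal.ofReal (c2r * sr) := by
    rw [ENNReal.ofReal_mul hc2rnn, ENNReal.ofReal_toReal hc₂top, hsr,
      ENNReal.ofReal_toReal hsfin]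
  have hAy : ∃ y ∈ F x, edist y₀ y < c₂ * s := by
    rw [← EMetric.infEdist_lt_iff]; exact hAlt
  obtain ⟨y, hyF, hyd⟩ := hAy
  have hynorm : ‖y - y₀‖ < c2r * sr := by
    rw [hc₂s, edist_dist] at hyd
    have := (ENNReal.ofReal_lt_ofReal_iff_of_nonneg dist_nonneg).mp hyd
    rw [dist_comm, dist_eq_norm] at this
    exact this
  have hc2rpos : 0 < c2r := by
    by_contra hcp
    push_neg at hcp
    nlinarith [norm_nonneg (y - y₀)]
  -- p₀ ∈ C
  have hp₀C : ((x, y) : X × Y) ∈ C := by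
    refine ⟨hyF, ⟨?_, ?_⟩⟩
    · rw [Metric.mem_closedBall]
      show dist x x₀ ≤ r
      linarith [hxδ]
    · rw [Metric.mem_closedBall, dist_eq_norm]
      show ‖y - y₀‖ ≤ r
      have : c2r * sr ≤ c2r * δ := mul_le_mul_of_nonneg_left hsrδ.le hc2rnn
      linarith
  -- Ekeland
  set Φ : X × Y → ℝ := fun z => c1r * ‖z.1‖ + (ρ/2) * ‖z.2‖ with hΦ
  have hΦc : Continuous Φ := by
    apply Continuous.add
    · exact continuous_const.mul (continuous_norm.comp continuous_fst)
    · exact continuous_const.mul (continuous_norm.comp continuous_snd)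
  obtain ⟨p', hp'C, hp'dist, hp'min⟩ := ekeland_aux hCclosed
    (f := fun z : X × Y => ‖z.2 - y₀‖)
    ((continuous_snd.sub continuous_const).norm)
    (fun z _ => norm_nonneg _)
    hΦc (by simp [hΦ])
    (fun z w => by
      simp only [hΦ, Prod.fst_add, Prod.snd_add]
      have h1 := norm_add_le z.1 w.1
      have h2 := norm_add_le z.2 w.2
      nlinarith)
    (m := min c1r (ρ/2)) (lt_min hc1rpos (by linarith))
    (fun z => by
      rw [Prod.norm_def]
      have h1 : min c1r (ρ/2) * max ‖z.1‖ ‖z.2‖ ≤ min c1r (ρ/2) * (‖z.1‖ + ‖z.2‖) := by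
        apply mul_le_mul_of_nonneg_left _ (le_min hc1rpos.le (by linarith))
        exact max_le (by linarith [norm_nonneg z.2]) (by linarith [norm_nonneg z.1])
      have h2 : min c1r (ρ/2) * (‖z.1‖ + ‖z.2‖) ≤ c1r * ‖z.1‖ + (ρ/2) * ‖z.2‖ := by
        have := min_le_left c1r (ρ/2)
        have := min_le_right c1r (ρ/2)
        nlinarith [norm_nonneg z.1, norm_nonneg z.2]
      simp only [hΦ]
      linarith)
    hp₀C
  obtain ⟨x', y'⟩ := p'
  simp only [Prod.fst_sub, Prod.snd_sub] at hp'dist hp'min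
  -- unpack Ekeland conclusions
  have hineq1 : ‖y' - y₀‖ + (c1r * ‖x' - x‖ + (ρ/2) * ‖y' - y‖) ≤ ‖y - y₀‖ := hp'dist
  have hx'x : ‖x' - x‖ < sr := by
    have h1 : c1r * ‖x' - x‖ ≤ ‖y - y₀‖ := by
      have ha := norm_nonneg (y' - y₀)
      have hb := mul_nonneg (show (0:ℝ) ≤ ρ/2 by linarith) (norm_nonneg (y' - y))
      linarith
    have h2 : c1r * ‖x' - x‖ < c2r * sr := lt_of_le_of_lt h1 hynorm
    have h3 : c2r * sr < c1r * sr := mul_lt_mul_of_pos_right hc12 hsrpos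
    have h4 : c1r * ‖x' - x‖ < c1r * sr := h2.trans h3
    exact lt_of_mul_lt_mul_left h4 hc1rpos.le
  have hy'y₀ : ‖y' - y₀‖ < c2r * sr := by
    have ha := mul_nonneg hc1rpos.le (norm_nonneg (x' - x))
    have hb := mul_nonneg (show (0:ℝ) ≤ ρ/2 by linarith) (norm_nonneg (y' - y))
    linarith
  have hx'S : x' ∉ S := by
    intro hx'S
    have h1 : s ≤ edist x x' := EMetric.infEdist_le_edist_of_mem hx'S
    rw [edist_dist, dist_eq_norm] at h1
    have h2 : sr ≤ ‖x - x'‖ := ENNReal.toReal_le_of_le_ofReal (norm_nonneg _) h1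
    rw [norm_sub_rev] at h2
    linarith
  have hy'ne : y' - y₀ ≠ 0 := by
    intro h
    rw [sub_eq_zero] at h
    exact hx'S (by rw [hS]; show y₀ ∈ F x'; rw [← h]; exact hp'C.1)
  -- pair constraints
  have hx'x₀ : ‖x' - x₀‖ < ρ := by
    calc ‖x' - x₀‖ ≤ ‖x' - x‖ + ‖x - x₀‖ := norm_sub_le_norm_sub_add_norm_sub _ _ _
    _ < sr + δ := by
        have hxx := hxδ; rw [dist_eq_norm] at hxx
        exact add_lt_add hx'x hxx
    _ < 2 * δ := by linarith
    _ ≤ ρ := hδρ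
  have hy'y₀ρ : ‖y' - y₀‖ < ρ := by
    calc ‖y' - y₀‖ < c2r * sr := hy'y₀
    _ ≤ c2r * δ := mul_le_mul_of_nonneg_left hsrδ.le hc2rnn
    _ < ρ := hδc2ρ
  -- interior facts
  have hx'r : ‖x' - x₀‖ < r := by
    have h2δ : ‖x' - x₀‖ < 2 * δ := by
      calc ‖x' - x₀‖ ≤ ‖x' - x‖ + ‖x - x₀‖ := norm_sub_le_norm_sub_add_norm_sub _ _ _
      _ < sr + δ := by
          have hxx := hxδ; rw [dist_eq_norm] at hxx
          exact add_lt_add hx'x hxx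
      _ < 2 * δ := by linarith
    linarith
  have hy'r : ‖y' - y₀‖ < r := by
    calc ‖y' - y₀‖ < c2r * sr := hy'y₀
    _ ≤ c2r * δ := mul_le_mul_of_nonneg_left hsrδ.le hc2rnn
    _ < r := hδc2r
  -- the minimized convex function
  set g : X × Y → ℝ := fun z => ‖z.2 - y₀‖ + (c1r * ‖z.1 - x'‖ + (ρ/2) * ‖z.2 - y'‖) with hg
  have hgconv : ConvexOn ℝ Set.univ g := by
    have h1 := convexOn_norm_comp_clm_sub (ContinuousLinearMap.snd ℝ X Y) y₀ (zero_le_one)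
    have h2 := convexOn_norm_comp_clm_sub (ContinuousLinearMap.fst ℝ X Y) x' hc1rpos.le
    have h3 := convexOn_norm_comp_clm_sub (ContinuousLinearMap.snd ℝ X Y) y'
      (show (0:ℝ) ≤ ρ/2 by linarith)
    have hsum := h1.add (h2.add h3)
    refine ⟨convex_univ, fun p hp q hq st t hst ht hstt => ?_⟩
    have := hsum.2 hp hq hst ht hstt
    simpa only [hg, Pi.add_apply, ContinuousLinearMap.coe_snd', ContinuousLinearMap.coe_fst',
      one_mul] using this
  have hgcont : Continuous g := by
    apply Continuous.add
    · exact (continuous_snd.sub continuous_const).norm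
    · apply Continuous.add
      · exact continuous_const.mul (continuous_fst.sub continuous_const).norm
      · exact continuous_const.mul (continuous_snd.sub continuous_const).norm
  have hgmin : ∀ z ∈ C, g (x', y') ≤ g z := by
    intro z hz
    have := hp'min z hz
    simp only [hg, hΦ, Prod.fst_sub, Prod.snd_sub]
    simp only [sub_self, norm_zero, mul_zero, add_zero]
    calc ‖y' - y₀‖ ≤ ‖z.2 - y₀‖ + (c1r * ‖z.1 - x'‖ + (ρ/2) * ‖z.2 - y'‖) := this
    _ = ‖z.2 - y₀‖ + (c1r * ‖z.1 - x'‖ + ρ/2 * ‖z.2 - y'‖) := by ring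
  obtain ⟨h, hsub, hpos⟩ := subgradient_of_isMinOn hgconv hgcont hCconv hp'C hgmin
  -- components
  set ξ : X →L[ℝ] ℝ := h.comp (ContinuousLinearMap.inl ℝ X Y) with hξ
  set η : Y →L[ℝ] ℝ := h.comp (ContinuousLinearMap.inr ℝ X Y) with hη
  have hcomp : ∀ z : X × Y, h z = ξ z.1 + η z.2 := by
    intro z
    rw [hξ, hη]
    simp only [ContinuousLinearMap.comp_apply, ContinuousLinearMap.inl_apply,
      ContinuousLinearMap.inr_apply]
    rw [← map_add]
    congr
    exact (Prod.ext_iff.mpr ⟨by simp, by simp⟩).symm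
  have hgp' : g (x', y') = ‖y' - y₀‖ := by
    simp [hg]
  -- ‖ξ‖ ≤ c1r
  have hξbound : ∀ w : X, ξ w ≤ c1r * ‖w‖ := by
    intro w
    have := hsub (x' + w, y')
    simp only [Prod.mk_sub_mk] at this
    rw [hcomp] at this
    simp only [add_sub_cancel_left, sub_self, map_zero, add_zero] at this
    rw [hgp'] at this
    simp only [hg] at this
    simp only [sub_self, norm_zero, mul_zero, add_zero, add_sub_cancel_left] at this
    linarith [this]
  have hξnorm : ‖ξ‖ ≤ c1r := by
    apply ContinuousLinearMap.opNorm_le_bound _ hc1rpos.le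
    intro w
    rw [Real.norm_eq_abs, abs_le]
    constructor
    · have := hξbound (-w); simp only [map_neg, norm_neg] at this; linarith
    · exact hξbound w
  -- η star inequality
  have hηstar : ∀ v : Y, η (v - y') ≤ ‖v - y₀‖ - ‖y' - y₀‖ + (ρ/2) * ‖v - y'‖ := by
    intro v
    have := hsub (x', v)
    simp only [Prod.mk_sub_mk] at this
    rw [hcomp] at this
    simp only [sub_self, map_zero, zero_add] at this
    rw [hgp'] at this
    simp only [hg] at this
    simp only [sub_self, norm_zero, mul_zero, zero_add] at this
    linarith [this]
  obtain ⟨j₀, hj₀sub, hj₀dist⟩ := norm_subgradient_split (by linarith : (0:ℝ) ≤ ρ/2) hηstar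
  obtain ⟨hj₀norm, hj₀val⟩ := dualityMap_of_norm_subgradient hy'ne hj₀sub
  -- coderivative membership
  set l : X →L[ℝ] ℝ := -ξ with hl
  set q : Y →L[ℝ] ℝ := η with hq
  have hcod : l ∈ coderiv F x' y' q := by
    refine ⟨hp'C.1, fun ε hε => ?_⟩
    have hball : (Metric.ball x₀ r ×ˢ Metric.ball y₀ r) ∈ 𝓝 ((x', y') : X × Y) := by
      apply (isOpen_ball.prod isOpen_ball).mem_nhds
      refine ⟨?_, ?_⟩
      · rw [Metric.mem_ball, dist_eq_norm]; exact hx'r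
      · rw [Metric.mem_ball, dist_eq_norm]; exact hy'r
    filter_upwards [mem_nhdsWithin_of_mem_nhds hball, eventually_mem_nhdsWithin] with z hz hz'
    have hzC : z ∈ C := by
      refine ⟨hz'.1, ⟨?_, ?_⟩⟩
      · exact Metric.ball_subset_closedBall hz.1
      · exact Metric.ball_subset_closedBall hz.2
    have h0 := hpos z hzC
    have hval : (l.coprod (-q)) (z - (x', y')) = - h (z - (x', y')) := by
      rw [ContinuousLinearMap.coprod_apply, hcomp]
      simp only [hl, hq, ContinuousLinearMap.neg_apply]
      ring
    rw [hval]
    have : -h (z - (x', y')) ≤ 0 := by linarith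
    exact this.trans (by positivity)
  -- final chain
  have hfinal : (⨅ (p : X × Y)
      (_ : p.2 ∈ F p.1 ∧ y₀ ∉ F p.1 ∧ ‖p.1 - x₀‖ < ρ ∧ ‖p.2 - y₀‖ < ρ),
        sdSlopeF F y₀ ρ p.1 p.2) ≤ sdSlopeF F y₀ ρ x' y' :=
    iInf₂_le ((x', y') : X × Y) ⟨hp'C.1, fun hcon => hx'S hcon, hx'x₀, hy'y₀ρ⟩
  refine le_trans hfinal ?_
  have hsd : sdSlopeF F y₀ ρ x' y' ≤ (‖l‖₊ : ℝ≥0∞) := by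
    rw [sdSlopeF]
    exact iInf₂_le l ⟨q, j₀, ⟨hj₀norm, hj₀val⟩, le_trans hj₀dist (by linarith), hcod⟩
  refine le_trans hsd ?_
  have hlnorm : ‖l‖ ≤ c1r := by
    rw [hl, norm_neg]; exact hξnorm
  calc (‖l‖₊ : ℝ≥0∞) = ENNReal.ofReal ‖l‖ := (ofReal_norm l).symm
  _ ≤ ENNReal.ofReal c1r := ENNReal.ofReal_le_ofReal hlnorm
  _ = c₁ := by rw [hc1r, ENNReal.ofReal_toReal hc₁top]
  _ ≤ c := hc₁c.le


theorem easy_direction {X Y : Type*}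
    [NormedAddCommGroup X] [NormedSpace ℝ X]
    [NormedAddCommGroup Y] [NormedSpace ℝ Y]
    (F : X → Set Y) (x₀ : X) (y₀ : Y) (hgph : y₀ ∈ F x₀)
    (hconv : Convex ℝ {p : X × Y | p.2 ∈ F p.1}) :
    srMod F x₀ y₀ ≤ strictSdSlopeF F x₀ y₀ := by
  set L := strictSdSlopeF F x₀ y₀ with hL
  rw [srMod]
  apply iSup₂_le
  intro δ hδ
  -- use ∀ c < 1, c * inf ≤ L
  have hmul : ∀ c : ℝ≥0∞, c < 1 → c * (⨅ (x : X) (_ : dist x x₀ < δ ∧ y₀ ∉ F x),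
      EMetric.infEdist y₀ (F x) / EMetric.infEdist x {x' | y₀ ∈ F x'}) ≤ L := by
    intro c hc
    -- choose ρ
    set cr : ℝ := c.toReal with hcr
    have hcfin : c ≠ ⊤ := ne_top_of_lt (lt_of_lt_of_le hc le_top)
    have hcr1 : cr < 1 := by
      rw [hcr, ← ENNReal.toReal_one]
      exact ENNReal.toReal_strict_mono ENNReal.one_ne_top hc
    set ρ : ℝ := min (δ/2) ((1 - cr)/2) with hρ
    have hcrnn : 0 ≤ cr := ENNReal.toReal_nonneg
    have hρpos : 0 < ρ := lt_min (by linarith) (by linarith)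
    have hρδ : ρ ≤ δ := le_trans (min_le_left _ _) (by linarith)
    have hρ1 : ρ < 1 := lt_of_le_of_lt (min_le_right _ _) (by linarith)
    have hcρ : cr ≤ 1 - ρ := by
      have := min_le_right (δ/2) ((1 - cr)/2); rw [← hρ] at this; linarith
    -- c * inf ≤ inf-pairs at ρ
    have hstep : c * (⨅ (x : X) (_ : dist x x₀ < δ ∧ y₀ ∉ F x),
        EMetric.infEdist y₀ (F x) / EMetric.infEdist x {x' | y₀ ∈ F x'}) ≤
        ⨅ (p : X × Y)
          (_ : p.2 ∈ F p.1 ∧ y₀ ∉ F p.1 ∧ ‖p.1 - x₀‖ < ρ ∧ ‖p.2 - y₀‖ < ρ),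
            sdSlopeF F y₀ ρ p.1 p.2 := by
      apply le_iInf₂
      rintro ⟨x, y⟩ ⟨hyF, hy₀F, hxρ, hyρ⟩
      -- x is admissible for the sr infimum
      have hxadm : dist x x₀ < δ ∧ y₀ ∉ F x := ⟨by rw [dist_eq_norm]; linarith, hy₀F⟩
      have h1 : (⨅ (x : X) (_ : dist x x₀ < δ ∧ y₀ ∉ F x),
          EMetric.infEdist y₀ (F x) / EMetric.infEdist x {x' | y₀ ∈ F x'}) ≤
          EMetric.infEdist y₀ (F x) / EMetric.infEdist x {x' | y₀ ∈ F x'} :=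
        iInf₂_le x hxadm
      rw [sdSlopeF]
      apply le_iInf₂
      intro l hl
      obtain ⟨q, j, ⟨hjnorm, hjval⟩, hqj, hlq⟩ := hl
      -- the key real inequality
      have hyne : y - y₀ ≠ 0 := by
        intro h
        exact hy₀F (by rwa [sub_eq_zero] at h ▸ hyF)
      have hkey : ∀ u : X, y₀ ∈ F u → (1 - ρ) * ‖y - y₀‖ ≤ ‖l‖ * ‖x - u‖ := by
        intro u hu
        have hmem : ((u, y₀) : X × Y) ∈ {p : X × Y | p.2 ∈ F p.1} := hu
        have := frNormalCone_le_of_convex hconv hlq hmem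
        simp only [ContinuousLinearMap.coprod_apply, Prod.fst_sub, Prod.snd_sub,
          ContinuousLinearMap.neg_apply] at this
        -- this : l (u - x) + -(q (y₀ - y)) ≤ 0
        have hq1 : q (y - y₀) ≤ l (x - u) := by
          have hqeq : q (y₀ - y) = - q (y - y₀) := by
            rw [← map_neg]; congr 1; abel
          have hleq : l (u - x) = - l (x - u) := by
            rw [← map_neg]; congr 1; abel
          rw [hqeq, hleq] at this; linarith
        have hq2 : (1 - ρ) * ‖y - y₀‖ ≤ q (y - y₀) := by
          have hdiff : |q (y - y₀) - j (y - y₀)| ≤ ρ * ‖y - y₀‖ := by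
            have := (q - j).le_opNorm (y - y₀)
            rw [ContinuousLinearMap.sub_apply] at this
            calc |q (y - y₀) - j (y - y₀)| = ‖q (y - y₀) - j (y - y₀)‖ := rfl
            _ ≤ ‖q - j‖ * ‖y - y₀‖ := this
            _ ≤ ρ * ‖y - y₀‖ := by
                apply mul_le_mul_of_nonneg_right hqj (norm_nonneg _)
          rw [hjval] at hdiff
          rw [abs_le] at hdiff
          linarith [hdiff.1]
        have := l.le_opNorm (x - u)
        calc (1 - ρ) * ‖y - y₀‖ ≤ q (y - y₀) := hq2
        _ ≤ l (x - u) := hq1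
        _ ≤ |l (x - u)| := le_abs_self _
        _ ≤ ‖l‖ * ‖x - u‖ := this
      -- l ≠ 0
      have hynorm : 0 < ‖y - y₀‖ := norm_pos_iff.2 hyne
      have hlne : l ≠ 0 := by
        intro h
        have := hkey x₀ hgph
        rw [h] at this
        simp only [norm_zero, zero_mul] at this
        nlinarith
      have hlpos : 0 < ‖l‖ := norm_pos_iff.2 hlne
      -- ENNReal estimates
      have hAle : EMetric.infEdist y₀ (F x) ≤ ENNReal.ofReal ‖y - y₀‖ := by
        calc EMetric.infEdist y₀ (F x) ≤ edist y₀ y := EMetric.infEdist_le_edist_of_mem hyF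
        _ = ENNReal.ofReal ‖y - y₀‖ := by
            rw [edist_dist, dist_eq_norm]; congr 1; rw [norm_sub_rev]
      have hBge : ENNReal.ofReal ((1 - ρ) * ‖y - y₀‖ / ‖l‖) ≤
          EMetric.infEdist x {x' | y₀ ∈ F x'} := by
        apply Metric.le_infEDist.2
        intro u hu
        rw [edist_dist, dist_eq_norm]
        apply ENNReal.ofReal_le_ofReal
        rw [div_le_iff₀ hlpos]
        have := hkey u hu
        linarith
      have hratio : EMetric.infEdist y₀ (F x) / EMetric.infEdist x {x' | y₀ ∈ F x'} ≤
          ENNReal.ofReal (‖l‖ / (1 - ρ)) := by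
        calc EMetric.infEdist y₀ (F x) / EMetric.infEdist x {x' | y₀ ∈ F x'}
            ≤ ENNReal.ofReal ‖y - y₀‖ / ENNReal.ofReal ((1 - ρ) * ‖y - y₀‖ / ‖l‖) :=
              ENNReal.div_le_div hAle hBge
        _ = ENNReal.ofReal (‖y - y₀‖ / ((1 - ρ) * ‖y - y₀‖ / ‖l‖)) := by
            have h1ρ : (0:ℝ) < 1 - ρ := by linarith
            rw [← ENNReal.ofReal_div_of_pos (by positivity)]
        _ = ENNReal.ofReal (‖l‖ / (1 - ρ)) := by
            have h1ρ : (1:ℝ) - ρ ≠ 0 := by intro h; simp only [sub_eq_zero] at h; linarith [h.symm]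
            congr 1
            field_simp
      calc c * (⨅ (x : X) (_ : dist x x₀ < δ ∧ y₀ ∉ F x),
          EMetric.infEdist y₀ (F x) / EMetric.infEdist x {x' | y₀ ∈ F x'})
          ≤ ENNReal.ofReal (1 - ρ) * ENNReal.ofReal (‖l‖ / (1 - ρ)) := by
            apply mul_le_mul'
            · rw [← ENNReal.ofReal_toReal hcfin]
              exact ENNReal.ofReal_le_ofReal hcρ
            · exact le_trans h1 hratio
      _ = ENNReal.ofReal ((1 - ρ) * (‖l‖ / (1 - ρ))) := by
            rw [ENNReal.ofReal_mul (by linarith)]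
      _ = ENNReal.ofReal ‖l‖ := by
            have h1ρ : (1:ℝ) - ρ ≠ 0 := by intro h; simp only [sub_eq_zero] at h; linarith [h.symm]
            congr 1; field_simp
      _ = (‖l‖₊ : ℝ≥0∞) := ofReal_norm l
    refine le_trans hstep ?_
    rw [hL, strictSdSlopeF]
    exact le_iSup₂ (f := fun ρ _ => ⨅ (p : X × Y)
      (_ : p.2 ∈ F p.1 ∧ y₀ ∉ F p.1 ∧ ‖p.1 - x₀‖ < ρ ∧ ‖p.2 - y₀‖ < ρ),
        sdSlopeF F y₀ ρ p.1 p.2) ρ hρpos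
  -- conclude via mul_le_of_forall_lt
  have := ENNReal.mul_le_of_forall_lt (a := 1)
    (b := ⨅ (x : X) (_ : dist x x₀ < δ ∧ y₀ ∉ F x),
      EMetric.infEdist y₀ (F x) / EMetric.infEdist x {x' | y₀ ∈ F x'}) (c := L)
    (fun a' ha' b' hb' => le_trans (mul_le_mul' le_rfl hb'.le) (hmul a' ha'))
  rwa [one_mul] at this


/-- if `X`, `Y` are Banach spaces and `gph F` is convex and locally closed
near `(x̄,ȳ) ∈ gph F`, then `sr[F](x̄,ȳ) = \overline{|∂F|}(x̄,ȳ)`. -/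
theorem srMod_eq_strictSdSlopeF {X Y : Type*}
    [NormedAddCommGroup X] [NormedSpace ℝ X] [CompleteSpace X]
    [NormedAddCommGroup Y] [NormedSpace ℝ Y] [CompleteSpace Y]
    (F : X → Set Y) (x₀ : X) (y₀ : Y) (hgph : y₀ ∈ F x₀)
    (hconv : Convex ℝ {p : X × Y | p.2 ∈ F p.1})
    (hclosed : ∃ U ∈ 𝓝 (x₀, y₀), IsClosed U ∧ IsClosed ({p : X × Y | p.2 ∈ F p.1} ∩ U)) :
    srMod F x₀ y₀ = strictSdSlopeF F x₀ y₀ :=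
  le_antisymm (easy_direction F x₀ y₀ hgph hconv)
    (hard_direction F x₀ y₀ hgph hconv hclosed)
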